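/- arXiv:2110.12997 — 3 statements merged into one kernel-verified Lean document; each statement's English description precedes it below -/
import Mathlib

section
/- Let α be a nonempty finite type and let p, q, r, r' be probability mass functions on α that are strictly positive everywhere. Let β > 0, ε > 0, and L ≥ 0 be real numbers. Assume: (i) the likelihood-ratio identity p(a)/r(a) = q(a)/r'(a) holds for every a ∈ α; (ii) |log(p(a)/r(a))| ≤ L for every a ∈ α; and (iii) KL(p‖q) ≤ ε/β. Then |KL(p‖r) − KL(q‖r')| ≤ √(2ε/β) · L. (This is Lemma 2 of the paper: a policy whose trajectory distributions in the source and target environments are within ε/β in KL divergence induces joint distributions that are similarly close to the respective desired distributions, where p, q play the roles of the source- and target-induced joint distributions of goal and trajectory, r, r' the desired joint distributions, and the ratio identity encodes that the transition-dynamics factors cancel in the likelihood ratios.) -/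
open Finset

/-- Kullback–Leibler divergence between two mass functions on a finite type,
with the convention that terms with `p a = 0` contribute `0`
(automatic here since `0 * log (0 / q a) = 0`). -/
noncomputable def KL {α : Type*} [Fintype α] (p q : α → ℝ) : ℝ :=
  ∑ a, p a * Real.log (p a / q a)

noncomputable def gfun (x : ℝ) : ℝ := x * Real.log x - x + 1 - 3*(x-1)^2/(2*(x+2))
noncomputable def gfun' (x : ℝ) : ℝ := Real.log x - 3*(x-1)*(x+5)/(2*(x+2)^2)
noncomputable def gfun'' (x : ℝ) : ℝ := 1/x - 27/(x+2)^3

lemma hasDerivAt_gfun {x : ℝ} (hx : 0 < x) : HasDerivAt gfun (gfun' x) x := by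
  have hne : x + 2 ≠ 0 := by positivity
  have h1 : HasDerivAt (fun y : ℝ => y * Real.log y) (Real.log x + 1) x :=
    Real.hasDerivAt_mul_log hx.ne'
  have hnum : HasDerivAt (fun y : ℝ => 3*(y-1)^2) (3*(2*(x-1))) x := by
    have := ((hasDerivAt_id x).sub_const 1).pow 2
    simpa using this.const_mul 3
  have hden : HasDerivAt (fun y : ℝ => 2*(y+2)) 2 x := by
    simpa using ((hasDerivAt_id x).add_const 2).const_mul 2
  have hdiv := hnum.div hden (by positivity)
  have h := ((h1.sub (hasDerivAt_id x)).add_const 1).sub hdiv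
  convert h using 1
  · rfl
  · rfl
  · rfl
  unfold gfun'
  field_simp
  ring

lemma hasDerivAt_gfun' {x : ℝ} (hx : 0 < x) : HasDerivAt gfun' (gfun'' x) x := by
  have hne : x + 2 ≠ 0 := by positivity
  have h1 : HasDerivAt Real.log x⁻¹ x := Real.hasDerivAt_log hx.ne'
  have hnum : HasDerivAt (fun y : ℝ => 3*(y-1)*(y+5)) (3*(x+5) + 3*(x-1)) x := by
    have := (((hasDerivAt_id x).sub_const 1).const_mul 3).mul ((hasDerivAt_id x).add_const 5)
    exact this.congr_deriv (by simp only [id]; ring)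
  have hden : HasDerivAt (fun y : ℝ => 2*(y+2)^2) (2*(2*(x+2))) x := by
    have := (((hasDerivAt_id x).add_const 2).pow 2).const_mul 2
    simpa using this
  have hdiv := hnum.div hden (by positivity)
  have h := h1.sub hdiv
  convert h using 1
  · rfl
  · rfl
  · rfl
  unfold gfun''
  rw [inv_eq_one_div]
  field_simp
  ring

lemma gfun''_nonneg {x : ℝ} (hx : 0 < x) : 0 ≤ gfun'' x := by
  unfold gfun''
  rw [sub_nonneg, div_le_div_iff₀ (by positivity) hx]
  nlinarith [sq_nonneg (x-1), hx.le]

lemma gfun'_mono : MonotoneOn gfun' (Set.Ioi (0:ℝ)) := by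
  have hint : interior (Set.Ioi (0:ℝ)) = Set.Ioi 0 := interior_Ioi
  refine monotoneOn_of_deriv_nonneg (convex_Ioi 0)
    (fun x hx => (hasDerivAt_gfun' hx).continuousAt.continuousWithinAt) ?_ ?_
  · rw [hint]; exact fun x hx => (hasDerivAt_gfun' hx).differentiableAt.differentiableWithinAt
  · rw [hint]; intro x hx; rw [(hasDerivAt_gfun' hx).deriv]; exact gfun''_nonneg hx

lemma gfun'_one : gfun' 1 = 0 := by unfold gfun'; norm_num

lemma gfun_one : gfun 1 = 0 := by unfold gfun; norm_num

lemma gfun_nonneg {x : ℝ} (hx : 0 < x) : 0 ≤ gfun x := by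
  rcases le_total x 1 with h | h
  · have hanti : AntitoneOn gfun (Set.Ioc (0:ℝ) 1) := by
      refine antitoneOn_of_deriv_nonpos (convex_Ioc 0 1)
        (fun y hy => (hasDerivAt_gfun hy.1).continuousAt.continuousWithinAt) ?_ ?_
      · rw [interior_Ioc]
        exact fun y hy => (hasDerivAt_gfun hy.1).differentiableAt.differentiableWithinAt
      · rw [interior_Ioc]; intro y hy
        rw [(hasDerivAt_gfun hy.1).deriv]
        have := gfun'_mono (Set.mem_Ioi.2 hy.1) (Set.mem_Ioi.2 one_pos) hy.2.le
        rw [gfun'_one] at this; exact this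
    have := hanti (Set.mem_Ioc.2 ⟨hx, h⟩) (Set.mem_Ioc.2 ⟨one_pos, le_rfl⟩) h
    rwa [gfun_one] at this
  · have hmono : MonotoneOn gfun (Set.Ici (1:ℝ)) := by
      refine monotoneOn_of_deriv_nonneg (convex_Ici 1)
        (fun y hy => (hasDerivAt_gfun (lt_of_lt_of_le one_pos hy)).continuousAt.continuousWithinAt) ?_ ?_
      · rw [interior_Ici]
        exact fun y hy => (hasDerivAt_gfun (lt_trans one_pos hy)).differentiableAt.differentiableWithinAt
      · rw [interior_Ici]; intro y hy
        rw [(hasDerivAt_gfun (lt_trans one_pos hy)).deriv]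
        have := gfun'_mono (Set.mem_Ioi.2 one_pos) (Set.mem_Ioi.2 (lt_trans one_pos hy)) hy.le
        rw [gfun'_one] at this; exact this
    have := hmono (Set.mem_Ici.2 le_rfl) (Set.mem_Ici.2 h) h
    rwa [gfun_one] at this

/-- Csiszár's pointwise inequality. -/
lemma csiszar {p q : ℝ} (hp : 0 < p) (hq : 0 < q) :
    3*(p-q)^2/(p+2*q) ≤ 2*(p * Real.log (p/q) - p + q) := by
  have hx : 0 < p / q := div_pos hp hq
  have hg := gfun_nonneg hx
  unfold gfun at hg
  have hlog : Real.log (p/q) = Real.log (p/q) := rfl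
  have h2 : (0:ℝ) ≤ p/q * Real.log (p/q) - p/q + 1 - 3*(p/q-1)^2/(2*(p/q+2)) := hg
  have hq' : q ≠ 0 := hq.ne'
  have hden : 0 < p + 2*q := by linarith
  rw [div_le_iff₀ hden]
  have key : q * (p/q * Real.log (p/q) - p/q + 1 - 3*(p/q-1)^2/(2*(p/q+2))) =
      (p * Real.log (p/q) - p + q) - 3*(p-q)^2/(2*(p+2*q)) := by
    field_simp
  have h3 : (0:ℝ) ≤ (p * Real.log (p/q) - p + q) - 3*(p-q)^2/(2*(p+2*q)) := by
    rw [← key]; exact mul_nonneg hq.le h2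
  have h4 : 3*(p-q)^2/(2*(p+2*q)) ≤ p * Real.log (p/q) - p + q := by linarith
  calc 3*(p-q)^2 = (3*(p-q)^2/(2*(p+2*q))) * (2*(p+2*q)) := by field_simp
    _ ≤ (p * Real.log (p/q) - p + q) * (2*(p+2*q)) := by
        apply mul_le_mul_of_nonneg_right h4 (by positivity)
    _ = 2*(p * Real.log (p/q) - p + q) * (p+2*q) := by ring

/-- Pinsker's inequality (squared form) on a finite type. -/
lemma pinsker_sq {α : Type*} [Fintype α] (p q : α → ℝ)
    (hp_pos : ∀ a, 0 < p a) (hp_sum : ∑ a, p a = 1)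
    (hq_pos : ∀ a, 0 < q a) (hq_sum : ∑ a, q a = 1) :
    (∑ a, |p a - q a|) ^ 2 ≤ 2 * KL p q := by
  set f : α → ℝ := fun a => Real.sqrt ((p a + 2 * q a) / 3) with hf
  set g : α → ℝ := fun a => |p a - q a| / Real.sqrt ((p a + 2 * q a) / 3) with hg
  have hfpos : ∀ a, 0 < f a := fun a => Real.sqrt_pos.2 (by
    have := hp_pos a; have := hq_pos a; positivity)
  have hfg : ∀ a, f a * g a = |p a - q a| := fun a => by
    rw [mul_comm]; exact div_mul_cancel₀ _ (hfpos a).ne'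
  have hcs := sum_mul_sq_le_sq_mul_sq Finset.univ f g
  simp only [hfg] at hcs
  have hf2 : ∑ a, f a ^ 2 = 1 := by
    have : ∀ a, f a ^ 2 = (p a + 2 * q a) / 3 := fun a =>
      Real.sq_sqrt (by have := hp_pos a; have := hq_pos a; positivity)
    rw [Finset.sum_congr rfl fun a _ => this a]
    rw [← Finset.sum_div, Finset.sum_add_distrib, hp_sum, ← Finset.mul_sum, hq_sum]
    norm_num
  have hg2 : ∑ a, g a ^ 2 ≤ 2 * KL p q := by
    have hpt : ∀ a, g a ^ 2 ≤ 2 * (p a * Real.log (p a / q a) - p a + q a) := by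
      intro a
      have hc := csiszar (hp_pos a) (hq_pos a)
      have hs : g a ^ 2 = 3 * (p a - q a) ^ 2 / (p a + 2 * q a) := by
        rw [hg]
        rw [div_pow, Real.sq_sqrt (by have := hp_pos a; have := hq_pos a; positivity),
          sq_abs]
        field_simp
      rw [hs]; exact hc
    calc ∑ a, g a ^ 2 ≤ ∑ a, 2 * (p a * Real.log (p a / q a) - p a + q a) :=
          Finset.sum_le_sum fun a _ => hpt a
      _ = 2 * KL p q := by
          rw [← Finset.mul_sum]
          congr 1
          unfold KL
          rw [Finset.sum_add_distrib, Finset.sum_sub_distrib, hp_sum, hq_sum]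
          ring
  calc (∑ a, |p a - q a|) ^ 2 ≤ (∑ a, f a ^ 2) * ∑ a, g a ^ 2 := hcs
    _ = ∑ a, g a ^ 2 := by rw [hf2, one_mul]
    _ ≤ 2 * KL p q := hg2

/-- Lemma 2 of the paper: if the likelihood ratios `p/r` and `q/r'` coincide,
their logs are bounded by `L`, and `KL(p‖q) ≤ ε/β`, then the two KL divergences
to the respective desired distributions differ by at most `√(2ε/β)·L`. -/
theorem lemma2_policy_near_optimality_transfer
    {α : Type*} [Fintype α] [Nonempty α]
    (p q r r' : α → ℝ)
    (hp_pos : ∀ a, 0 < p a) (hp_sum : ∑ a, p a = 1)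
    (hq_pos : ∀ a, 0 < q a) (hq_sum : ∑ a, q a = 1)
    (hr_pos : ∀ a, 0 < r a) (hr_sum : ∑ a, r a = 1)
    (hr'_pos : ∀ a, 0 < r' a) (hr'_sum : ∑ a, r' a = 1)
    (β ε L : ℝ) (hβ : 0 < β) (hε : 0 < ε) (hL : 0 ≤ L)
    (hratio : ∀ a, p a / r a = q a / r' a)
    (hlog_bound : ∀ a, |Real.log (p a / r a)| ≤ L)
    (hKL : KL p q ≤ ε / β) :
    |KL p r - KL q r'| ≤ Real.sqrt (2 * ε / β) * L := by
  have hdiff : KL p r - KL q r' = ∑ a, (p a - q a) * Real.log (p a / r a) := by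
    unfold KL
    rw [← Finset.sum_sub_distrib]
    refine Finset.sum_congr rfl fun a _ => ?_
    rw [hratio a]
    ring
  have htv : ∑ a, |p a - q a| ≤ Real.sqrt (2 * ε / β) := by
    have h1 := pinsker_sq p q hp_pos hp_sum hq_pos hq_sum
    have h2 : (∑ a, |p a - q a|) ^ 2 ≤ 2 * ε / β := by
      have : 2 * KL p q ≤ 2 * ε / β := by
        rw [mul_div_assoc]; linarith
      linarith
    have h3 : 0 ≤ ∑ a, |p a - q a| := Finset.sum_nonneg fun a _ => abs_nonneg _
    calc ∑ a, |p a - q a| = Real.sqrt ((∑ a, |p a - q a|) ^ 2) := (Real.sqrt_sq h3).symm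
      _ ≤ Real.sqrt (2 * ε / β) := Real.sqrt_le_sqrt h2
  calc |KL p r - KL q r'| = |∑ a, (p a - q a) * Real.log (p a / r a)| := by rw [hdiff]
    _ ≤ ∑ a, |(p a - q a) * Real.log (p a / r a)| := Finset.abs_sum_le_sum_abs _ _
    _ ≤ ∑ a, |p a - q a| * L := by
        refine Finset.sum_le_sum fun a _ => ?_
        rw [abs_mul]
        exact mul_le_mul_of_nonneg_left (hlog_bound a) (abs_nonneg _)
    _ = (∑ a, |p a - q a|) * L := by rw [← Finset.sum_mul]
    _ ≤ Real.sqrt (2 * ε / β) * L := mul_le_mul_of_nonneg_right htv hL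
end

section
/- Let α be a nonempty finite type and let pD, qD, pO, qO, rS, rT be probability mass functions on α that are strictly positive everywhere. Let β > 0, ε > 0, and L ≥ 0 be real numbers. Assume: (i) the likelihood-ratio identities pD(a)/rS(a) = qD(a)/rT(a) and pO(a)/rS(a) = qO(a)/rT(a) hold for every a ∈ α; (ii) |log(pD(a)/rS(a))| ≤ L and |log(pO(a)/rS(a))| ≤ L for every a ∈ α; (iii) KL(pD‖qD) ≤ ε/β and KL(pO‖qO) ≤ ε/β; and (iv) KL(pD‖rS) ≤ KL(pO‖rS). Then KL(qD‖rT) ≤ KL(qO‖rT) + 2·√(2ε/β)·L. (This is Theorem 1 of the paper: pD and qD are the joint distributions of goal and trajectory induced by the DARS-optimal policy under the source and target dynamics respectively, pO and qO those induced by the target-optimal policy, rS and rT the desired joint distributions in source and target; hypothesis (iv) is source-optimality of the DARS policy, hypothesis (iii) for pO, qO is Assumption 2, and the ratio identities encode that the transition-dynamics factors cancel in the likelihood ratios. The conclusion says the DARS policy is near-optimal in the target environment.) -/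
open Finset

private lemma phi_mono : MonotoneOn (fun t : ℝ => Real.log t - 2*(t-1)/(t+1)) (Set.Ioi 0) := by
  have hderiv : ∀ x ∈ Set.Ioi (0:ℝ), HasDerivAt (fun t : ℝ => Real.log t - 2*(t-1)/(t+1))
      (x⁻¹ - 4/(x+1)^2) x := by
    intro x hx
    have hx0 : (0:ℝ) < x := hx
    have h1 : x + 1 ≠ 0 := by positivity
    have hlog := Real.hasDerivAt_log hx0.ne'
    have hnum : HasDerivAt (fun t : ℝ => 2*(t-1)) 2 x := by
      simpa using ((hasDerivAt_id x).sub_const 1).const_mul 2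
    have hden : HasDerivAt (fun t : ℝ => t+1) 1 x := (hasDerivAt_id x).add_const 1
    have hq := hnum.div hden h1
    have hq' : HasDerivAt (fun t : ℝ => 2*(t-1)/(t+1)) (4/(x+1)^2) x := by
      refine hq.congr_deriv ?_
      field_simp
      ring
    exact hlog.sub hq'
  apply monotoneOn_of_deriv_nonneg (convex_Ioi 0)
  · intro x hx
    exact ((hderiv x hx).differentiableAt.continuousAt).continuousWithinAt
  · intro x hx
    rw [interior_Ioi] at hx
    exact ((hderiv x hx).differentiableAt).differentiableWithinAt
  · intro x hx
    rw [interior_Ioi] at hx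
    rw [(hderiv x hx).deriv]
    have hx0 : (0:ℝ) < x := hx
    have h4 : 4/(x+1)^2 ≤ x⁻¹ := by
      rw [div_le_iff₀ (by positivity), inv_mul_eq_div, le_div_iff₀ hx0]
      nlinarith [sq_nonneg (x-1)]
    linarith

private lemma log_ge {t : ℝ} (ht : 1 ≤ t) : 2*(t-1)/(t+1) ≤ Real.log t := by
  have h := phi_mono (Set.mem_Ioi.2 one_pos) (Set.mem_Ioi.2 (lt_of_lt_of_le one_pos ht)) ht
  simp only [Real.log_one] at h
  norm_num at h
  linarith

private lemma log_le {t : ℝ} (h0 : 0 < t) (ht : t ≤ 1) : Real.log t ≤ 2*(t-1)/(t+1) := by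
  have h := phi_mono (Set.mem_Ioi.2 h0) (Set.mem_Ioi.2 one_pos) ht
  simp only [Real.log_one] at h
  norm_num at h
  linarith

private lemma g_hasDeriv {x : ℝ} (hx0 : 0 < x) :
    HasDerivAt (fun t : ℝ => t * Real.log t - t + 1 - 3*(t-1)^2/(2*t+4))
      (Real.log x - 6*(x-1)*(x+5)/(2*x+4)^2) x := by
  have hden : (2*x+4) ≠ 0 := by positivity
  have h1 : HasDerivAt (fun t : ℝ => t * Real.log t) (Real.log x + 1) x := by
    have := (hasDerivAt_id x).mul (Real.hasDerivAt_log hx0.ne')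
    refine this.congr_deriv ?_
    field_simp
    simp only [id]
    ring
  have hnum : HasDerivAt (fun t : ℝ => 3*(t-1)^2) (6*(x-1)) x := by
    have := (((hasDerivAt_id x).sub_const 1).pow 2).const_mul 3
    refine this.congr_deriv ?_
    simp
    ring
  have hd : HasDerivAt (fun t : ℝ => 2*t+4) 2 x := by
    simpa using ((hasDerivAt_id x).const_mul 2).add_const 4
  have hq := hnum.div hd hden
  have hq' : HasDerivAt (fun t : ℝ => 3*(t-1)^2/(2*t+4)) (6*(x-1)*(x+5)/(2*x+4)^2) x := by
    refine hq.congr_deriv ?_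
    field_simp
    ring
  have := ((h1.sub (hasDerivAt_id x)).add_const 1).sub hq'
  refine this.congr_deriv ?_
  ring

private lemma key {t : ℝ} (ht : 0 < t) :
    3*(t-1)^2/(2*t+4) ≤ t * Real.log t - t + 1 := by
  set g : ℝ → ℝ := fun t => t * Real.log t - t + 1 - 3*(t-1)^2/(2*t+4) with hg
  have hg1 : g 1 = 0 := by simp [hg]
  have hcont : ∀ x ∈ Set.Ioi (0:ℝ), ContinuousWithinAt g (Set.Ioi 0) x := by
    intro x hx
    exact ((g_hasDeriv hx).differentiableAt.continuousAt).continuousWithinAt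
  have hnn : 0 ≤ g t := by
    rcases le_or_gt 1 t with h1 | h1
    · have hmono : MonotoneOn g (Set.Ici 1) := by
        apply monotoneOn_of_deriv_nonneg (convex_Ici 1)
        · intro x hx
          exact (((g_hasDeriv (lt_of_lt_of_le one_pos hx)).differentiableAt.continuousAt)).continuousWithinAt
        · intro x hx
          rw [interior_Ici] at hx
          exact (g_hasDeriv (lt_trans one_pos hx)).differentiableAt.differentiableWithinAt
        · intro x hx
          rw [interior_Ici] at hx
          have hx1 : (1:ℝ) < x := hx
          have hx0 : (0:ℝ) < x := lt_trans one_pos hx1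
          rw [(g_hasDeriv hx0).deriv]
          have hlb := log_ge hx1.le
          have h2 : 6*(x-1)*(x+5)/(2*x+4)^2 ≤ 2*(x-1)/(x+1) := by
            rw [div_le_div_iff₀ (by positivity) (by positivity)]
            nlinarith [sq_nonneg (x-1)]
          linarith
      have := hmono (Set.mem_Ici.2 le_rfl) (Set.mem_Ici.2 h1) h1
      rw [hg1] at this; exact this
    · have hanti : AntitoneOn g (Set.Ioc 0 1) := by
        apply antitoneOn_of_deriv_nonpos (convex_Ioc 0 1)
        · intro x hx
          exact (((g_hasDeriv hx.1).differentiableAt.continuousAt)).continuousWithinAt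
        · intro x hx
          rw [interior_Ioc] at hx
          exact (g_hasDeriv hx.1).differentiableAt.differentiableWithinAt
        · intro x hx
          rw [interior_Ioc] at hx
          obtain ⟨hx0, hx1⟩ := hx
          rw [(g_hasDeriv hx0).deriv]
          have hub := log_le hx0 hx1.le
          have h2 : 2*(x-1)/(x+1) ≤ 6*(x-1)*(x+5)/(2*x+4)^2 := by
            rw [div_le_div_iff₀ (by positivity) (by positivity)]
            nlinarith [sq_nonneg (x-1)]
          linarith
      have := hanti (Set.mem_Ioc.2 ⟨ht, h1.le⟩) (Set.mem_Ioc.2 ⟨one_pos, le_rfl⟩) h1.le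
      rw [hg1] at this; exact this
  simpa [hg, sub_nonneg] using hnn

private lemma key_xy {x y : ℝ} (hx : 0 < x) (hy : 0 < y) :
    3*(x-y)^2 ≤ (2*x+4*y) * (x * Real.log (x/y) - x + y) := by
  have ht : 0 < x/y := div_pos hx hy
  have hk := key ht
  rw [div_le_iff₀ (by positivity)] at hk
  have hxy : x = (x/y)*y := by field_simp
  set l := Real.log (x/y)
  set t := x/y
  rw [hxy]
  nlinarith [mul_le_mul_of_nonneg_left hk (sq_nonneg y)]

private lemma pinsker {α : Type*} [Fintype α] (p q : α → ℝ)
    (hp : ∀ a, 0 < p a) (hq : ∀ a, 0 < q a)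
    (hps : ∑ a, p a = 1) (hqs : ∑ a, q a = 1) :
    (∑ a, |p a - q a|)^2 ≤ 2 * KL p q := by
  set f : α → ℝ := fun a => |p a - q a| / Real.sqrt (2*p a + 4*q a) with hf
  set g : α → ℝ := fun a => Real.sqrt (2*p a + 4*q a) with hg
  have hpos : ∀ a, (0:ℝ) < 2*p a + 4*q a := fun a => by have := hp a; have := hq a; linarith
  have hsq : ∀ a, g a ^ 2 = 2*p a + 4*q a := fun a => Real.sq_sqrt (hpos a).le
  have hgne : ∀ a, g a ≠ 0 := fun a => (Real.sqrt_pos.2 (hpos a)).ne'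
  have hfg : ∀ a, f a * g a = |p a - q a| := fun a => div_mul_cancel₀ _ (hgne a)
  have cs := sum_mul_sq_le_sq_mul_sq Finset.univ f g
  rw [Finset.sum_congr rfl (fun a _ => hfg a)] at cs
  have hg2 : ∑ a, g a ^ 2 = 6 := by
    rw [Finset.sum_congr rfl (fun a _ => hsq a), Finset.sum_add_distrib, ← Finset.mul_sum,
      ← Finset.mul_sum, hps, hqs]
    norm_num
  have hf2 : ∑ a, f a ^ 2 ≤ KL p q / 3 := by
    have hterm : ∀ a, f a ^ 2 ≤ (p a * Real.log (p a / q a) - p a + q a) / 3 := by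
      intro a
      have hk := key_xy (hp a) (hq a)
      rw [hf, div_pow, hsq a, _root_.sq_abs, div_le_div_iff₀ (hpos a) (by norm_num)]
      linarith
    calc ∑ a, f a ^ 2 ≤ ∑ a, (p a * Real.log (p a / q a) - p a + q a) / 3 :=
          Finset.sum_le_sum fun a _ => hterm a
      _ = KL p q / 3 := by
          rw [← Finset.sum_div, Finset.sum_add_distrib, Finset.sum_sub_distrib, hps, hqs, KL]
          norm_num
  calc (∑ a, |p a - q a|)^2 ≤ (∑ a, f a ^ 2) * ∑ a, g a ^ 2 := cs
    _ ≤ (KL p q / 3) * 6 := by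
        rw [hg2]
        have h0 : (0:ℝ) ≤ ∑ a, g a ^ 2 := Finset.sum_nonneg fun a _ => sq_nonneg _
        nlinarith [hf2]
    _ = 2 * KL p q := by ring

private lemma step {α : Type*} [Fintype α] (p q r r' : α → ℝ) (L M : ℝ)
    (hp : ∀ a, 0 < p a) (hq : ∀ a, 0 < q a)
    (hps : ∑ a, p a = 1) (hqs : ∑ a, q a = 1)
    (hratio : ∀ a, p a / r a = q a / r' a)
    (hlog : ∀ a, |Real.log (p a / r a)| ≤ L)
    (hM : 0 ≤ M) (hKL : 2 * KL p q ≤ M ^ 2) (hL : 0 ≤ L) :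
    |KL q r' - KL p r| ≤ M * L := by
  have h1 : KL q r' = ∑ a, q a * Real.log (p a / r a) := by
    rw [KL]
    exact Finset.sum_congr rfl fun a _ => by rw [hratio a]
  have h2 : KL q r' - KL p r = ∑ a, (q a - p a) * Real.log (p a / r a) := by
    rw [h1, KL, ← Finset.sum_sub_distrib]
    exact Finset.sum_congr rfl fun a _ => by ring
  rw [h2]
  have h3 : |∑ a, (q a - p a) * Real.log (p a / r a)| ≤ (∑ a, |q a - p a|) * L := by
    rw [Finset.sum_mul]
    refine (Finset.abs_sum_le_sum_abs _ _).trans (Finset.sum_le_sum fun a _ => ?_)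
    calc |(q a - p a) * Real.log (p a / r a)|
        = |q a - p a| * |Real.log (p a / r a)| := abs_mul _ _
      _ ≤ |q a - p a| * L := mul_le_mul_of_nonneg_left (hlog a) (abs_nonneg _)
  have h4 : ∑ a, |q a - p a| ≤ M := by
    have hpin := pinsker p q hp hq hps hqs
    have heq : ∑ a, |q a - p a| = ∑ a, |p a - q a| :=
      Finset.sum_congr rfl fun a _ => abs_sub_comm _ _
    nlinarith [Finset.sum_nonneg (fun a (_ : a ∈ Finset.univ) => abs_nonneg (q a - p a))]
  calc |∑ a, (q a - p a) * Real.log (p a / r a)| ≤ (∑ a, |q a - p a|) * L := h3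
    _ ≤ M * L := mul_le_mul_of_nonneg_right h4 hL

/-- Theorem 1 of the paper: the DARS-optimal policy (inducing `pD` in source and
`qD` in target) is near-optimal in the target environment compared with the
target-optimal policy (inducing `pO` in source and `qO` in target), relative to
the desired joint distributions `rS` (source) and `rT` (target). -/
theorem theorem1_dars_near_optimality
    {α : Type*} [Fintype α] [Nonempty α]
    (pD qD pO qO rS rT : α → ℝ)
    (hpD_pos : ∀ a, 0 < pD a) (hpD_sum : ∑ a, pD a = 1)
    (hqD_pos : ∀ a, 0 < qD a) (hqD_sum : ∑ a, qD a = 1)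
    (hpO_pos : ∀ a, 0 < pO a) (hpO_sum : ∑ a, pO a = 1)
    (hqO_pos : ∀ a, 0 < qO a) (hqO_sum : ∑ a, qO a = 1)
    (hrS_pos : ∀ a, 0 < rS a) (hrS_sum : ∑ a, rS a = 1)
    (hrT_pos : ∀ a, 0 < rT a) (hrT_sum : ∑ a, rT a = 1)
    (β ε L : ℝ) (hβ : 0 < β) (hε : 0 < ε) (hL : 0 ≤ L)
    (hratioD : ∀ a, pD a / rS a = qD a / rT a)
    (hratioO : ∀ a, pO a / rS a = qO a / rT a)
    (hlogD : ∀ a, |Real.log (pD a / rS a)| ≤ L)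
    (hlogO : ∀ a, |Real.log (pO a / rS a)| ≤ L)
    (hKLD : KL pD qD ≤ ε / β)
    (hKLO : KL pO qO ≤ ε / β)
    (hsource_opt : KL pD rS ≤ KL pO rS) :
    KL qD rT ≤ KL qO rT + 2 * Real.sqrt (2 * ε / β) * L := by
  set M := Real.sqrt (2 * ε / β) with hM
  have hM0 : 0 ≤ M := Real.sqrt_nonneg _
  have hMsq : M ^ 2 = 2 * ε / β := Real.sq_sqrt (by positivity)
  have hhalf : (2:ℝ) * ε / β = 2 * (ε / β) := by ring
  have hD : 2 * KL pD qD ≤ M ^ 2 := by rw [hMsq, hhalf]; linarith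
  have hO : 2 * KL pO qO ≤ M ^ 2 := by rw [hMsq, hhalf]; linarith
  have s1 := step pD qD rS rT L M hpD_pos hqD_pos hpD_sum hqD_sum hratioD hlogD hM0 hD hL
  have s2 := step pO qO rS rT L M hpO_pos hqO_pos hpO_sum hqO_sum hratioO hlogO hM0 hO hL
  rw [abs_le] at s1 s2
  linarith [s1.1, s1.2, s2.1, s2.2]
end

section
/- Let S, A be nonempty finite types, and let p_S, p_T : S × A × S → ℝ be two probability mass functions on the finite type S × A × S (joint distributions over transitions drawn from source and target buffers). For X ∈ {S, T} define the (s,a)-marginal m_X(s,a) = ∑_{s'} p_X(s,a,s') and, where m_X(s,a) > 0, the conditional P_X(s'|s,a) = p_X(s,a,s') / m_X(s,a). Define the Bayes-optimal classifiers under an equal mixture: q^{sas}(source | s,a,s') = p_S(s,a,s') / (p_S(s,a,s') + p_T(s,a,s')), q^{sas}(target | s,a,s') = p_T(s,a,s') / (p_S(s,a,s') + p_T(s,a,s')), q^{sa}(source | s,a) = m_S(s,a) / (m_S(s,a) + m_T(s,a)), and q^{sa}(target | s,a) = m_T(s,a) / (m_S(s,a) + m_T(s,a)). Then for every (s, a,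 s') with p_S(s,a,s') > 0 and p_T(s,a,s') > 0, the reward modification satisfies: log P_S(s'|s,a) − log P_T(s'|s,a) = log( q^{sas}(source|s,a,s') / q^{sas}(target|s,a,s') ) − log( q^{sa}(source|s,a) / q^{sa}(target|s,a) ). (This is the Bayes'-rule identity of Section 3.5 expressing Δr via the two classifiers.) -/
open Finset

/-- The Bayes'-rule identity of Section 3.5: the reward modification
`Δr = log P_S(s'|s,a) − log P_T(s'|s,a)` equals the difference between the
log-ratios of the Bayes-optimal `(s,a,s')`-classifier and `(s,a)`-classifier
under an equal mixture of source and target transition distributions. -/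
theorem delta_r_via_classifiers
    {S A : Type*} [Fintype S] [Fintype A] [Nonempty S] [Nonempty A]
    (pS pT : S × A × S → ℝ)
    (hpS_nonneg : ∀ x, 0 ≤ pS x) (hpS_sum : ∑ x, pS x = 1)
    (hpT_nonneg : ∀ x, 0 ≤ pT x) (hpT_sum : ∑ x, pT x = 1)
    (s : S) (a : A) (s' : S)
    (hS_pos : 0 < pS (s, a, s')) (hT_pos : 0 < pT (s, a, s')) :
    Real.log (pS (s, a, s') / ∑ u, pS (s, a, u))
      - Real.log (pT (s, a, s') / ∑ u, pT (s, a, u))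
    = Real.log ((pS (s, a, s') / (pS (s, a, s') + pT (s, a, s')))
        / (pT (s, a, s') / (pS (s, a, s') + pT (s, a, s'))))
      - Real.log (((∑ u, pS (s, a, u)) / ((∑ u, pS (s, a, u)) + (∑ u, pT (s, a, u))))
        / ((∑ u, pT (s, a, u)) / ((∑ u, pS (s, a, u)) + (∑ u, pT (s, a, u))))) := by
  have hmS : 0 < ∑ u, pS (s, a, u) :=
    lt_of_lt_of_le hS_pos (Finset.single_le_sum (fun u _ => hpS_nonneg (s, a, u)) (mem_univ s'))
  have hmT : 0 < ∑ u, pT (s, a, u) :=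
    lt_of_lt_of_le hT_pos (Finset.single_le_sum (fun u _ => hpT_nonneg (s, a, u)) (mem_univ s'))
  set a1 := pS (s, a, s')
  set b1 := pT (s, a, s')
  set mS := ∑ u, pS (s, a, u)
  set mT := ∑ u, pT (s, a, u)
  have hab : a1 + b1 ≠ 0 := by positivity
  have hmm : mS + mT ≠ 0 := by positivity
  have e1 : (a1 / (a1 + b1)) / (b1 / (a1 + b1)) = a1 / b1 := by
    field_simp
  have e2 : (mS / (mS + mT)) / (mT / (mS + mT)) = mS / mT := by
    field_simp
  rw [e1, e2, Real.log_div hS_pos.ne' hmS.ne', Real.log_div hT_pos.ne' hmT.ne',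
    Real.log_div hS_pos.ne' hT_pos.ne', Real.log_div hmS.ne' hmT.ne']
  ring
end
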